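/- Let A be an n×n unitary complex matrix and X an invertible matrix with A + X invertible. Then A* + X⁻¹ is invertible and c_{A*}(X⁻¹) = -A · c_A(X) · A. -/

import Mathlib

open Matrix

/-- The generalized Cayley transform centered at `B`: `c_B(Y) = (I - B*Y)(B + Y)⁻¹`. -/
noncomputable def cayley {n : ℕ} (B Y : Matrix (Fin n) (Fin n) ℂ) :
    Matrix (Fin n) (Fin n) ℂ :=
  (1 - Bᴴ * Y) * (B + Y)⁻¹

/-- If `A` is unitary, `X` is invertible and `A + X` is invertible, then
`A* + X⁻¹` is invertible and `c_{A*}(X⁻¹) = -A c_A(X) A`. -/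
theorem cayley_of_inverse {n : ℕ} (A X : Matrix (Fin n) (Fin n) ℂ)
    (hA : A * Aᴴ = 1) (hX : IsUnit X) (hAX : IsUnit (A + X)) :
    IsUnit (Aᴴ + X⁻¹) ∧ cayley Aᴴ (X⁻¹) = -(A * cayley A X * A) := by
  have hXd : IsUnit X.det := (Matrix.isUnit_iff_isUnit_det X).mp hX
  have hAXd : IsUnit (A + X).det := (Matrix.isUnit_iff_isUnit_det _).mp hAX
  have hAH : Aᴴ * A = 1 := mul_eq_one_comm.mp hA
  have hXX : X * X⁻¹ = 1 := Matrix.mul_nonsing_inv X hXd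
  have hX'X : X⁻¹ * X = 1 := Matrix.nonsing_inv_mul X hXd
  have hAXinv : (A + X) * (A + X)⁻¹ = 1 := Matrix.mul_nonsing_inv _ hAXd
  have key : Aᴴ + X⁻¹ = Aᴴ * (A + X) * X⁻¹ := by
    rw [mul_add, hAH, add_mul, one_mul, mul_assoc, hXX, mul_one, add_comm]
  have hunit : IsUnit (Aᴴ + X⁻¹) := by
    rw [key]
    exact ((IsUnit.of_mul_eq_one_right _ hA).mul hAX).mul
      (IsUnit.of_mul_eq_one_right _ hXX)
  refine ⟨hunit, ?_⟩
  have hinv : (Aᴴ + X⁻¹)⁻¹ = X * (A + X)⁻¹ * A := by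
    apply Matrix.inv_eq_right_inv
    rw [key]
    calc Aᴴ * (A + X) * X⁻¹ * (X * (A + X)⁻¹ * A)
        = Aᴴ * (A + X) * (X⁻¹ * X) * ((A + X)⁻¹ * A) := by
          simp only [mul_assoc]
      _ = Aᴴ * ((A + X) * (A + X)⁻¹) * A := by
          rw [hX'X, mul_one]; simp only [mul_assoc]
      _ = 1 := by rw [hAXinv, mul_one, hAH]
  rw [cayley, cayley, conjTranspose_conjTranspose, hinv]
  have h1 : (1 - A * X⁻¹) * X = X - A := by
    rw [sub_mul, one_mul, mul_assoc, hX'X, mul_one]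
  have h2 : A * (1 - Aᴴ * X) = A - X := by
    rw [mul_sub, mul_one, ← mul_assoc, hA, one_mul]
  calc (1 - A * X⁻¹) * (X * (A + X)⁻¹ * A)
      = (1 - A * X⁻¹) * X * ((A + X)⁻¹ * A) := by simp only [mul_assoc]
    _ = (X - A) * ((A + X)⁻¹ * A) := by rw [h1]
    _ = -((A - X) * ((A + X)⁻¹ * A)) := by rw [← neg_sub, neg_mul]
    _ = -(A * ((1 - Aᴴ * X) * (A + X)⁻¹) * A) := by
        rw [← mul_assoc, ← mul_assoc, h2]
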